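/- For every p = (x, y, z, s) ∈ ℝ^n, the second partial derivative ∂²f/∂z²(p) equals Σ_{i=1}^{k} 2x_{2i}·e_{Y_i} + 6z·e_Z, and for every p ∈ Σ(f) the orthogonal projection of this vector onto the orthogonal complement of the range of Df_p equals σ(p). -/

import Mathlib

noncomputable section

open scoped RealInnerProductSpace

/-- Index type for the domain `ℝⁿ`, `n = 2k+2+m`: coordinates `x` (2k of them),
`y`, `z`, and `s` (m of them). -/
abbrev DomIx (k m : ℕ) := (Fin (2*k)) ⊕ Unit ⊕ Unit ⊕ (Fin m)

/-- The domain `ℝⁿ` with its Euclidean inner product. -/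
abbrev Dom (k m : ℕ) := EuclideanSpace ℝ (DomIx k m)

/-- Index type for the codomain `ℝ^{n+k}`: coordinates `X` (2k+1), `Y` (k), `Z`, `S` (m). -/
abbrev CodIx (k m : ℕ) := (Fin (2*k+1)) ⊕ (Fin k) ⊕ Unit ⊕ (Fin m)

/-- The codomain `ℝ^{n+k}` with its Euclidean inner product. -/
abbrev Cod (k m : ℕ) := EuclideanSpace ℝ (CodIx k m)

/-- The `x`-coordinates of a point (0-based: `px p j` is `x_{j+1}`). -/
def px {k m : ℕ} (p : Dom k m) (j : Fin (2*k)) : ℝ := p (Sum.inl j)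

/-- The `y`-coordinate of a point. -/
def py {k m : ℕ} (p : Dom k m) : ℝ := p (Sum.inr (Sum.inl ()))

/-- The `z`-coordinate of a point. -/
def pz {k m : ℕ} (p : Dom k m) : ℝ := p (Sum.inr (Sum.inr (Sum.inl ())))

/-- The `s`-coordinates of a point. -/
def ps {k m : ℕ} (p : Dom k m) (j : Fin m) : ℝ := p (Sum.inr (Sum.inr (Sum.inr j)))

/-- The (0-based) index of the coordinate `x_{2i-1}` (1-based), for `i : Fin k` (0-based). -/
def xo {k : ℕ} (i : Fin k) : Fin (2*k) := ⟨2*i.1, by have := i.isLt; omega⟩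

/-- The (0-based) index of the coordinate `x_{2i}` (1-based), for `i : Fin k` (0-based). -/
def xe {k : ℕ} (i : Fin k) : Fin (2*k) := ⟨2*i.1+1, by have := i.isLt; omega⟩

/-- The cusp normal form `f : ℝⁿ → ℝ^{n+k}`:
`X_i = x_i`, `X_{2k+1} = y`, `Y_i = z x_{2i-1} + z² x_{2i}`, `Z = z y + z³`, `S_j = s_j`. -/
def cuspF (k m : ℕ) (p : Dom k m) : Cod k m :=
  (EuclideanSpace.equiv (CodIx k m) ℝ).symm fun q =>
    match q with
    | Sum.inl j => if h : j.1 < 2*k then px p ⟨j.1, h⟩ else py p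
    | Sum.inr (Sum.inl i) => pz p * px p (xo i) + (pz p)^2 * px p (xe i)
    | Sum.inr (Sum.inr (Sum.inl _)) => pz p * py p + (pz p)^3
    | Sum.inr (Sum.inr (Sum.inr j)) => ps p j

/-- The singular set `Σ(f)` of the cusp normal form:
`x_{2i-1} + 2 z x_{2i} = 0` for all `i` and `y + 3z² = 0`. -/
def SingSet (k m : ℕ) : Set (Dom k m) :=
  {p | (∀ i : Fin k, px p (xo i) + 2 * pz p * px p (xe i) = 0) ∧ py p + 3 * (pz p)^2 = 0}

/-- The standard basis vector `e_z` of the domain. -/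
def ez (k m : ℕ) : Dom k m := EuclideanSpace.single (Sum.inr (Sum.inr (Sum.inl ()))) 1


/-- The section `σ : ℝⁿ → ℝ^{n+k}` given coordinatewise (1-based, `1 ≤ i ≤ k`) by
`σ_{X_{2i−1}} = −2z x_{2i}/(1+z²+z⁴)`, `σ_{X_{2i}} = −2z² x_{2i}/(1+z²+z⁴)`,
`σ_{X_{2k+1}} = −6z²/(1+z²)`, `σ_{Y_i} = 2x_{2i}/(1+z²+z⁴)`, `σ_Z = 6z/(1+z²)`, `σ_{S_j} = 0`. -/
def sigmaF (k m : ℕ) (p : Dom k m) : Cod k m :=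
  (EuclideanSpace.equiv (CodIx k m) ℝ).symm fun q =>
    match q with
    | Sum.inl j =>
        if h : j.1 < 2*k then
          if h2 : j.1 % 2 = 0 then
            -- the coordinate `X_{2i-1}` (1-based) with `2i-1 = j.1+1`, so `x_{2i} = x`-coord `j.1+1`
            -2 * pz p * px p ⟨j.1+1, by omega⟩ / (1 + (pz p)^2 + (pz p)^4)
          else
            -- the coordinate `X_{2i}` (1-based) with `2i = j.1+1`, so `x_{2i} = x`-coord `j.1`
            -2 * (pz p)^2 * px p ⟨j.1, h⟩ / (1 + (pz p)^2 + (pz p)^4)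
        else
          -- the coordinate `X_{2k+1}`
          -6 * (pz p)^2 / (1 + (pz p)^2)
    | Sum.inr (Sum.inl i) => 2 * px p (xe i) / (1 + (pz p)^2 + (pz p)^4)
    | Sum.inr (Sum.inr (Sum.inl _)) => 6 * pz p / (1 + (pz p)^2)
    | Sum.inr (Sum.inr (Sum.inr _)) => 0

/-- The standard basis vector `e_{Y_i}` (0-based `i`) of the codomain. -/
def eY (k m : ℕ) (i : Fin k) : Cod k m := EuclideanSpace.single (Sum.inr (Sum.inl i)) 1

/-- The standard basis vector `e_Z` of the codomain. -/
def eZ (k m : ℕ) : Cod k m := EuclideanSpace.single (Sum.inr (Sum.inr (Sum.inl ()))) 1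

/-- The second partial derivative `∂²f/∂z²` of a map at `p`: the derivative in the
direction `e_z` of the map `q ↦ Df_q(e_z)`. -/
def d2z (k m : ℕ) (f : Dom k m → Cod k m) (p : Dom k m) : Cod k m :=
  fderiv ℝ (fun q => fderiv ℝ f q (ez k m)) p (ez k m)
namespace Stmt4Aux

open Finset ContinuousLinearMap

variable {k m : ℕ}

/-- index of z in the domain -/
abbrev iz (k m : ℕ) : DomIx k m := Sum.inr (Sum.inr (Sum.inl ()))
abbrev iy (k m : ℕ) : DomIx k m := Sum.inr (Sum.inl ())

def prX (k m : ℕ) (j : Fin (2*k)) : Dom k m →L[ℝ] ℝ := EuclideanSpace.proj (Sum.inl j)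
def prY (k m : ℕ) : Dom k m →L[ℝ] ℝ := EuclideanSpace.proj (iy k m)
def prZ (k m : ℕ) : Dom k m →L[ℝ] ℝ := EuclideanSpace.proj (iz k m)
def prS (k m : ℕ) (j : Fin m) : Dom k m →L[ℝ] ℝ := EuclideanSpace.proj (Sum.inr (Sum.inr (Sum.inr j)))

/-- rows of the Jacobian of `cuspF` at `p` -/
def row (k m : ℕ) (p : Dom k m) : CodIx k m → (Dom k m →L[ℝ] ℝ)
  | Sum.inl j => if h : j.1 < 2*k then prX k m ⟨j.1, h⟩ else prY k m
  | Sum.inr (Sum.inl i) => pz p • prX k m (xo i) + (pz p)^2 • prX k m (xe i)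
      + (px p (xo i) + 2 * pz p * px p (xe i)) • prZ k m
  | Sum.inr (Sum.inr (Sum.inl _)) => pz p • prY k m + (py p + 3*(pz p)^2) • prZ k m
  | Sum.inr (Sum.inr (Sum.inr j)) => prS k m j

/-- The Jacobian as a continuous linear map. -/
def Df (k m : ℕ) (p : Dom k m) : Dom k m →L[ℝ] Cod k m :=
  (((EuclideanSpace.equiv (CodIx k m) ℝ).symm : (CodIx k m → ℝ) →L[ℝ] Cod k m)).comp
    (ContinuousLinearMap.pi (row k m p))

lemma Df_apply (p u : Dom k m) (q : CodIx k m) : Df k m p u q = row k m p q u := rfl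

lemma hz (p : Dom k m) : HasFDerivAt (fun q : Dom k m => pz q) (prZ k m) p :=
  (prZ k m).hasFDerivAt
lemma hy (p : Dom k m) : HasFDerivAt (fun q : Dom k m => py q) (prY k m) p :=
  (prY k m).hasFDerivAt
lemma hx (p : Dom k m) (j : Fin (2*k)) :
    HasFDerivAt (fun q : Dom k m => px q j) (prX k m j) p :=
  (prX k m j).hasFDerivAt
lemma hs (p : Dom k m) (j : Fin m) :
    HasFDerivAt (fun q : Dom k m => ps q j) (prS k m j) p :=
  (prS k m j).hasFDerivAt

lemma hasFDerivAt_cuspF (p : Dom k m) : HasFDerivAt (cuspF k m) (Df k m p) p := by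
  have h : HasFDerivAt (fun q : Dom k m => (fun c : CodIx k m =>
      ((EuclideanSpace.equiv (CodIx k m) ℝ) (cuspF k m q)) c))
      (ContinuousLinearMap.pi (row k m p)) p := by
    rw [hasFDerivAt_pi]
    intro c
    match c with
    | Sum.inl j =>
        by_cases h : j.1 < 2*k
        · simpa [cuspF, row, h] using hx p ⟨j.1, h⟩
        · simpa [cuspF, row, h] using hy p
    | Sum.inr (Sum.inl i) =>
        have h1 := ((hz p).mul (hx p (xo i))).add (((hasDerivAt_pow 2 (pz p)).comp_hasFDerivAt p (hz p)).mul (hx p (xe i)))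
        convert h1 using 1 <;> ext u <;> simp [row, cuspF] <;> ring
    | Sum.inr (Sum.inr (Sum.inl _)) =>
        have h1 := ((hz p).mul (hy p)).add ((hasDerivAt_pow 3 (pz p)).comp_hasFDerivAt p (hz p))
        convert h1 using 1 <;> ext u <;> simp [row, cuspF] <;> ring
    | Sum.inr (Sum.inr (Sum.inr j)) =>
        simpa [cuspF, row] using hs p j
  exact (((EuclideanSpace.equiv (CodIx k m) ℝ).symm :
      (CodIx k m → ℝ) →L[ℝ] Cod k m).hasFDerivAt.comp p h :)

lemma fderiv_cuspF (p : Dom k m) : fderiv ℝ (cuspF k m) p = Df k m p :=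
  (hasFDerivAt_cuspF p).fderiv

end Stmt4Aux
namespace Stmt4Aux

variable {k m : ℕ}

lemma piLp_sum_apply {ι κ : Type*} [Fintype ι] (s : Finset κ)
    (f : κ → EuclideanSpace ℝ ι) (c : ι) : (∑ i ∈ s, f i) c = ∑ i ∈ s, f i c := by
  exact map_sum (EuclideanSpace.proj (𝕜 := ℝ) c) f s

lemma ez_apply (q : DomIx k m) :
    ez k m q = if q = iz k m then 1 else 0 := by
  simp [ez, EuclideanSpace.single_apply]

lemma prX_ez (j : Fin (2*k)) : prX k m j (ez k m) = 0 := by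
  simp [prX, ez, EuclideanSpace.single_apply]
lemma prY_ez : prY k m (ez k m) = 0 := by
  simp [prY, iy, ez, EuclideanSpace.single_apply]
lemma prZ_ez : prZ k m (ez k m) = 1 := by
  simp [prZ, iz, ez, EuclideanSpace.single_apply]
lemma prS_ez (j : Fin m) : prS k m j (ez k m) = 0 := by
  simp [prS, ez, EuclideanSpace.single_apply]

lemma eY_apply (i : Fin k) (c : CodIx k m) :
    eY k m i c = if c = Sum.inr (Sum.inl i) then 1 else 0 := by
  simp [eY, EuclideanSpace.single_apply]
lemma eZ_apply (c : CodIx k m) :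
    eZ k m c = if c = Sum.inr (Sum.inr (Sum.inl ())) then 1 else 0 := by
  simp [eZ, EuclideanSpace.single_apply]

/-- coordinates of the candidate second derivative vector -/
lemma rhs_apply (a : Fin k → ℝ) (b : ℝ) (c : CodIx k m) :
    ((∑ i : Fin k, a i • eY k m i) + b • eZ k m) c =
      (match c with
        | Sum.inr (Sum.inl i) => a i
        | Sum.inr (Sum.inr (Sum.inl _)) => b
        | _ => 0) := by
  have : ((∑ i : Fin k, a i • eY k m i) + b • eZ k m) c
      = (∑ i : Fin k, a i * eY k m i c) + b * eZ k m c := by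
    rw [PiLp.add_apply, PiLp.smul_apply, piLp_sum_apply]
    simp [PiLp.smul_apply, smul_eq_mul]
  rw [this]
  match c with
  | Sum.inl j => simp [eY_apply, eZ_apply]
  | Sum.inr (Sum.inl i) => simp [eY_apply, eZ_apply]
  | Sum.inr (Sum.inr (Sum.inl _)) => simp [eY_apply, eZ_apply]
  | Sum.inr (Sum.inr (Sum.inr j)) => simp [eY_apply, eZ_apply]

lemma Df_ez_eq (q : Dom k m) :
    Df k m q (ez k m) =
      (∑ i : Fin k, (px q (xo i) + 2 * pz q * px q (xe i)) • eY k m i)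
        + (py q + 3*(pz q)^2) • eZ k m := by
  ext c
  rw [Df_apply, rhs_apply]
  match c with
  | Sum.inl j =>
      by_cases h : j.1 < 2*k <;> simp [row, h, prX_ez, prY_ez]
  | Sum.inr (Sum.inl i) => simp [row, prX_ez, prZ_ez]
  | Sum.inr (Sum.inr (Sum.inl _)) => simp [row, prY_ez, prZ_ez]
  | Sum.inr (Sum.inr (Sum.inr j)) => simp [row, prS_ez]

/-- Part 1 of the statement. -/
lemma d2z_eq (p : Dom k m) :
    d2z k m (cuspF k m) p =
      (∑ i : Fin k, (2 * px p (xe i)) • eY k m i) + (6 * pz p) • eZ k m := by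
  have hg : (fun q : Dom k m => fderiv ℝ (cuspF k m) q (ez k m)) =
      (fun q => (∑ i : Fin k, (px q (xo i) + 2 * pz q * px q (xe i)) • eY k m i)
        + (py q + 3*(pz q)^2) • eZ k m) := by
    funext q; rw [fderiv_cuspF, Df_ez_eq]
  have hYi : ∀ i : Fin k, HasFDerivAt
      (fun q : Dom k m => (px q (xo i) + 2 * pz q * px q (xe i)) • eY k m i)
      ((prX k m (xo i) + ((2 * pz p) • prX k m (xe i)
          + (2 * px p (xe i)) • prZ k m)).smulRight (eY k m i)) p := by
    intro i
    refine HasFDerivAt.smul_const ?_ _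
    have h1 := (hx p (xo i)).add (((hz p).const_mul 2).mul (hx p (xe i)))
    convert h1 using 1 <;> ext u <;> simp [ContinuousLinearMap.smul_apply] <;> ring
  have hZc : HasFDerivAt
      (fun q : Dom k m => (py q + 3*(pz q)^2) • eZ k m)
      ((prY k m + (6 * pz p) • prZ k m).smulRight (eZ k m)) p := by
    refine HasFDerivAt.smul_const ?_ _
    have h1 := (hy p).add (((hasDerivAt_pow 2 (pz p)).comp_hasFDerivAt p (hz p)).const_mul 3)
    convert h1 using 1 <;> ext u <;> simp [ContinuousLinearMap.smul_apply] <;> ring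
  have hsum : HasFDerivAt
      (fun q : Dom k m => (∑ i : Fin k, (px q (xo i) + 2 * pz q * px q (xe i)) • eY k m i)
        + (py q + 3*(pz q)^2) • eZ k m)
      ((∑ i : Fin k, (prX k m (xo i) + ((2 * pz p) • prX k m (xe i)
          + (2 * px p (xe i)) • prZ k m)).smulRight (eY k m i))
        + (prY k m + (6 * pz p) • prZ k m).smulRight (eZ k m)) p := by
    exact (HasFDerivAt.fun_sum (fun i _ => hYi i)).add hZc
  rw [d2z, hg, hsum.fderiv]
  simp only [ContinuousLinearMap.add_apply, ContinuousLinearMap.sum_apply,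
    ContinuousLinearMap.smulRight_apply, ContinuousLinearMap.smul_apply,
    prX_ez, prY_ez, prZ_ez, smul_eq_mul, mul_one, mul_zero, add_zero, zero_add]

end Stmt4Aux
namespace Stmt4Aux

variable {k m : ℕ}

/-- the preimage witness showing `v - σ(p)` lies in the range of `Df_p`. -/
def u0 (k m : ℕ) (p : Dom k m) : Dom k m :=
  (EuclideanSpace.equiv (DomIx k m) ℝ).symm fun q =>
    match q with
    | Sum.inl j =>
        if h2 : j.1 % 2 = 0 then
          2 * pz p * px p ⟨j.1+1, by have := j.isLt; omega⟩ / (1 + (pz p)^2 + (pz p)^4)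
        else
          2 * (pz p)^2 * px p j / (1 + (pz p)^2 + (pz p)^4)
    | Sum.inr (Sum.inl _) => 6 * (pz p)^2 / (1 + (pz p)^2)
    | Sum.inr (Sum.inr (Sum.inl _)) => 0
    | Sum.inr (Sum.inr (Sum.inr _)) => 0

lemma Df_u0 (p : Dom k m) :
    Df k m p (u0 k m p) =
      ((∑ i : Fin k, (2 * px p (xe i)) • eY k m i) + (6 * pz p) • eZ k m)
        - sigmaF k m p := by
  have hD : (1 + (pz p)^2 + (pz p)^4) ≠ 0 := by positivity
  have hE : (1 + (pz p)^2) ≠ 0 := by positivity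
  ext c
  have hsub : (((∑ i : Fin k, (2 * px p (xe i)) • eY k m i) + (6 * pz p) • eZ k m)
      - sigmaF k m p) c
      = ((∑ i : Fin k, (2 * px p (xe i)) • eY k m i) + (6 * pz p) • eZ k m) c
        - sigmaF k m p c := rfl
  rw [hsub, Df_apply, rhs_apply]
  match c with
  | Sum.inl j =>
      by_cases h : j.1 < 2*k
      · by_cases h2 : j.1 % 2 = 0
        · have hval : row k m p (Sum.inl j) (u0 k m p)
              = 2 * pz p * px p ⟨j.1+1, by omega⟩ / (1 + (pz p)^2 + (pz p)^4) := by
            simp [row, h, prX, u0, h2]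
          have hσ : sigmaF k m p (Sum.inl j)
              = -2 * pz p * px p ⟨j.1+1, by omega⟩ / (1 + (pz p)^2 + (pz p)^4) := by
            simp [sigmaF, h, h2]
          rw [hval, hσ]; ring
        · have hval : row k m p (Sum.inl j) (u0 k m p)
              = 2 * (pz p)^2 * px p ⟨j.1, h⟩ / (1 + (pz p)^2 + (pz p)^4) := by
            simp [row, h, prX, u0, h2]
          have hσ : sigmaF k m p (Sum.inl j)
              = -2 * (pz p)^2 * px p ⟨j.1, h⟩ / (1 + (pz p)^2 + (pz p)^4) := by
            simp [sigmaF, h, h2]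
          rw [hval, hσ]; ring
      · have hval : row k m p (Sum.inl j) (u0 k m p)
            = 6 * (pz p)^2 / (1 + (pz p)^2) := by
          simp [row, h, prY, u0, iy]
        have hσ : sigmaF k m p (Sum.inl j)
            = -6 * (pz p)^2 / (1 + (pz p)^2) := by
          simp [sigmaF, h]
        rw [hval, hσ]; ring
  | Sum.inr (Sum.inl i) =>
      have exo : u0 k m p (Sum.inl (xo i))
          = 2 * pz p * px p (xe i) / (1 + (pz p)^2 + (pz p)^4) := by
        have h2 : (xo i).1 % 2 = 0 := Nat.mul_mod_right 2 i.1
        have hfin : (⟨(xo i).1 + 1, by have := i.isLt; simp only [xo]; omega⟩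
            : Fin (2*k)) = xe i := by
          apply Fin.ext; simp [xo, xe]
        simp [u0, h2, hfin]
      have exe : u0 k m p (Sum.inl (xe i))
          = 2 * (pz p)^2 * px p (xe i) / (1 + (pz p)^2 + (pz p)^4) := by
        have h2 : (xe i).1 % 2 = 1 := by simp only [xe]; omega
        simp [u0, h2]
      have ez0 : u0 k m p (iz k m) = 0 := by simp [u0, iz]
      have hσ : sigmaF k m p (Sum.inr (Sum.inl i))
          = 2 * px p (xe i) / (1 + (pz p)^2 + (pz p)^4) := by simp [sigmaF]
      have hval : row k m p (Sum.inr (Sum.inl i)) (u0 k m p)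
          = pz p * u0 k m p (Sum.inl (xo i)) + (pz p)^2 * u0 k m p (Sum.inl (xe i))
            + (px p (xo i) + 2 * pz p * px p (xe i)) * u0 k m p (iz k m) := by
        simp [row, prX, prZ, iz]
      rw [hval, exo, exe, ez0, hσ]
      field_simp
      ring
  | Sum.inr (Sum.inr (Sum.inl _)) =>
      have ey0 : u0 k m p (iy k m) = 6 * (pz p)^2 / (1 + (pz p)^2) := by simp [u0, iy]
      have ez0 : u0 k m p (iz k m) = 0 := by simp [u0, iz]
      have hσ : sigmaF k m p (Sum.inr (Sum.inr (Sum.inl ())))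
          = 6 * pz p / (1 + (pz p)^2) := by simp [sigmaF]
      have hval : row k m p (Sum.inr (Sum.inr (Sum.inl ()))) (u0 k m p)
          = pz p * u0 k m p (iy k m) + (py p + 3*(pz p)^2) * u0 k m p (iz k m) := by
        simp [row, prY, prZ, iy, iz]
      rw [hval, ey0, ez0, hσ]
      field_simp
      ring
  | Sum.inr (Sum.inr (Sum.inr j)) =>
      simp [row, prS, u0, sigmaF]

end Stmt4Aux
namespace Stmt4Aux

open Finset

variable {k m : ℕ}

lemma sum_range_two_mul (k : ℕ) (f : ℕ → ℝ) :
    ∑ j ∈ Finset.range (2*k), f j = ∑ i ∈ Finset.range k, (f (2*i) + f (2*i+1)) := by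
  induction k with
  | zero => simp
  | succ n ih =>
      have h : 2*(n+1) = (2*n+1)+1 := by ring
      rw [Finset.sum_range_succ, ← ih, h, Finset.sum_range_succ, Finset.sum_range_succ]
      ring

/-- ℕ-indexed summand for the X-part of the inner product `⟪Df_p u, σ(p)⟫`. -/
def Fx (k m : ℕ) (p u : Dom k m) (j : ℕ) : ℝ :=
  if h : j < 2*k then
    (if h2 : j % 2 = 0 then
      u (Sum.inl (⟨j, h⟩ : Fin (2*k)))
        * (-2 * pz p * px p ⟨j+1, by omega⟩ / (1 + (pz p)^2 + (pz p)^4))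
    else
      u (Sum.inl (⟨j, h⟩ : Fin (2*k)))
        * (-2 * (pz p)^2 * px p ⟨j, h⟩ / (1 + (pz p)^2 + (pz p)^4)))
  else u (iy k m) * (-6 * (pz p)^2 / (1 + (pz p)^2))

/-- ℕ-indexed summand for the Y-part of the inner product `⟪Df_p u, σ(p)⟫`. -/
def Gy (k m : ℕ) (p u : Dom k m) (i : ℕ) : ℝ :=
  if hi : i < k then
    (pz p * u (Sum.inl (xo ⟨i, hi⟩)) + (pz p)^2 * u (Sum.inl (xe ⟨i, hi⟩)))
      * (2 * px p (xe ⟨i, hi⟩) / (1 + (pz p)^2 + (pz p)^4))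
  else 0

lemma inner_Df_sigma (p : Dom k m) (hp : p ∈ SingSet k m) (u : Dom k m) :
    ⟪Df k m p u, sigmaF k m p⟫ = 0 := by
  obtain ⟨h1, h2⟩ := hp
  rw [real_inner_comm, PiLp.inner_apply]
  simp only [RCLike.inner_apply, conj_trivial]
  rw [Fintype.sum_sum_type, Fintype.sum_sum_type, Fintype.sum_sum_type]
  have huniv : (Finset.univ : Finset Unit) = {()} := rfl
  have hX : ∑ j : Fin (2*k+1), Df k m p u (Sum.inl j) * sigmaF k m p (Sum.inl j)
      = ∑ j ∈ Finset.range (2*k+1), Fx k m p u j := by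
    rw [← Fin.sum_univ_eq_sum_range (Fx k m p u) (2*k+1)]
    refine Finset.sum_congr rfl fun j _ => ?_
    rw [Df_apply]
    by_cases h : j.1 < 2*k
    · by_cases hpar : j.1 % 2 = 0
      · simp [row, h, hpar, prX, sigmaF, Fx]
      · simp [row, h, hpar, prX, sigmaF, Fx]
    · simp [row, h, prY, sigmaF, Fx, iy]
  have hY : ∑ i : Fin k, Df k m p u (Sum.inr (Sum.inl i)) * sigmaF k m p (Sum.inr (Sum.inl i))
      = ∑ i ∈ Finset.range k, Gy k m p u i := by
    rw [← Fin.sum_univ_eq_sum_range (Gy k m p u) k]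
    refine Finset.sum_congr rfl fun i _ => ?_
    rw [Df_apply]
    have hc : px p (xo i) + 2 * pz p * px p (xe i) = 0 := h1 i
    have hval : row k m p (Sum.inr (Sum.inl i)) u
        = pz p * u (Sum.inl (xo i)) + (pz p)^2 * u (Sum.inl (xe i)) := by
      simp [row, prX, prZ, iz, hc]
    have hσ : sigmaF k m p (Sum.inr (Sum.inl i))
        = 2 * px p (xe i) / (1 + (pz p)^2 + (pz p)^4) := by
      simp [sigmaF]
    rw [hval, hσ]
    unfold Gy
    rw [dif_pos i.isLt]
  have hZ : ∑ a : Unit, Df k m p u (Sum.inr (Sum.inr (Sum.inl a))) *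
        sigmaF k m p (Sum.inr (Sum.inr (Sum.inl a)))
      = (pz p * u (iy k m)) * (6 * pz p / (1 + (pz p)^2)) := by
    rw [huniv, Finset.sum_singleton, Df_apply]
    have hval : row k m p (Sum.inr (Sum.inr (Sum.inl ()))) u = pz p * u (iy k m) := by
      simp [row, prY, prZ, iy, iz, h2]
    have hσ : sigmaF k m p (Sum.inr (Sum.inr (Sum.inl ())))
        = 6 * pz p / (1 + (pz p)^2) := by
      simp [sigmaF]
    rw [hval, hσ]
  have hS : ∀ j : Fin m, Df k m p u (Sum.inr (Sum.inr (Sum.inr j))) *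
      sigmaF k m p (Sum.inr (Sum.inr (Sum.inr j))) = 0 := by
    intro j; rw [Df_apply]
    simp [sigmaF]
  have hpair : ∑ j ∈ Finset.range (2*k+1), Fx k m p u j
      = ∑ i ∈ Finset.range k, (Fx k m p u (2*i) + Fx k m p u (2*i+1))
        + u (iy k m) * (-6 * (pz p)^2 / (1 + (pz p)^2)) := by
    rw [Finset.sum_range_succ, sum_range_two_mul]
    congr 1
    unfold Fx
    rw [dif_neg (by omega : ¬ (2*k < 2*k))]
  have hcancel : ∑ i ∈ Finset.range k, (Fx k m p u (2*i) + Fx k m p u (2*i+1))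
      + ∑ i ∈ Finset.range k, Gy k m p u i = 0 := by
    rw [← Finset.sum_add_distrib]
    refine Finset.sum_eq_zero fun i hi => ?_
    have hik : i < k := Finset.mem_range.1 hi
    have hlt : 2*i < 2*k := by omega
    have hlt1 : 2*i+1 < 2*k := by omega
    have hF0 : Fx k m p u (2*i)
        = u (Sum.inl (xo ⟨i, hik⟩)) *
            (-2 * pz p * px p (xe ⟨i, hik⟩) / (1 + (pz p)^2 + (pz p)^4)) := by
      unfold Fx
      rw [dif_pos hlt, dif_pos (Nat.mul_mod_right 2 i)]
      rfl
    have hF1 : Fx k m p u (2*i+1)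
        = u (Sum.inl (xe ⟨i, hik⟩)) *
            (-2 * (pz p)^2 * px p (xe ⟨i, hik⟩) / (1 + (pz p)^2 + (pz p)^4)) := by
      unfold Fx
      rw [dif_pos hlt1, dif_neg (by omega : ¬ ((2*i+1) % 2 = 0))]
      rfl
    have hG0 : Gy k m p u i
        = (pz p * u (Sum.inl (xo ⟨i, hik⟩)) + (pz p)^2 * u (Sum.inl (xe ⟨i, hik⟩)))
            * (2 * px p (xe ⟨i, hik⟩) / (1 + (pz p)^2 + (pz p)^4)) := by
      unfold Gy
      rw [dif_pos hik]
    rw [hF0, hF1, hG0]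
    ring
  rw [hX, hY, hZ, hpair, Fintype.sum_eq_zero _ hS]
  have hz0 : u (iy k m) * (-6 * (pz p)^2 / (1 + (pz p)^2))
      + (pz p * u (iy k m)) * (6 * pz p / (1 + (pz p)^2)) = 0 := by ring
  linear_combination hcancel + hz0

end Stmt4Aux

/-- `∂²f/∂z²(p) = Σᵢ 2 x_{2i} e_{Y_i} + 6z e_Z` for every `p`, and for `p ∈ Σ(f)`
the orthogonal projection of this vector onto the orthogonal complement of the range of `Df_p`
is `σ(p)`. -/
theorem statement4 (k m : ℕ) (hk : 1 ≤ k) :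
    (∀ p : Dom k m,
      d2z k m (cuspF k m) p = (∑ i : Fin k, (2 * px p (xe i)) • eY k m i) + (6 * pz p) • eZ k m) ∧
    (∀ p ∈ SingSet k m,
      (Submodule.orthogonalProjectionOnto (LinearMap.range (fderiv ℝ (cuspF k m) p : Dom k m →ₗ[ℝ] Cod k m))ᗮ
          (d2z k m (cuspF k m) p) : Cod k m) = sigmaF k m p) := by
  constructor
  · exact fun p => Stmt4Aux.d2z_eq p
  · intro p hp
    rw [Stmt4Aux.fderiv_cuspF]
    rw [Submodule.coe_orthogonalProjectionOnto_apply]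
    apply Submodule.eq_starProjection_of_mem_orthogonal
    · rw [Submodule.mem_orthogonal]
      rintro w ⟨u, rfl⟩
      exact Stmt4Aux.inner_Df_sigma p hp u
    · rw [Submodule.orthogonal_orthogonal]
      refine ⟨Stmt4Aux.u0 k m p, ?_⟩
      rw [Stmt4Aux.d2z_eq]
      exact Stmt4Aux.Df_u0 p
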